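/- Let j be a positive half-integer, d = 2j+1, and let ρ = Σ_{i,j'=1}^d ρ_{ij'}|ii⟩⟨j'j'| be a Schmidt-correlated density matrix on ℂ^d⊗ℂ^d (computational basis equal to the j_z eigenbasis) with Schmidt number s(ρ) ≤ r. Then Σ_{w∈{x,y,z}} [ Var_{ρ_a}(j_w) + Var_{ρ_b}(j_w) − 2·| ⟨j_w⊗j_w⟩_ρ − ⟨j_w⊗𝟙⟩_ρ⟨𝟙⊗j_w⟩_ρ | ] ≥ B_{j,r}, where ρ_a, ρ_b are the reduced states and Var_σ(A) = ⟨A²⟩_σ − ⟨A⟩_σ². -/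

import Mathlib

open Matrix Kronecker BigOperators Finset
open scoped ComplexOrder

/-- Expectation value ⟨A⟩_ρ = Re tr(ρ A). -/
noncomputable def expval {n : Type*} [Fintype n] (ρ A : Matrix n n ℂ) : ℝ :=
  ((ρ * A).trace).re

/-- A density matrix: positive semidefinite with unit trace. -/
def IsDensityMatrix {n : Type*} [Fintype n] (ρ : Matrix n n ℂ) : Prop :=
  ρ.PosSemidef ∧ ρ.trace = 1

/-- The projector |v⟩⟨v| associated to a vector. -/
noncomputable def pureState {n : Type*} (v : n → ℂ) : Matrix n n ℂ :=
  Matrix.vecMulVec v (star v)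

/-- A normalized vector. -/
def IsUnitVec {n : Type*} [Fintype n] (v : n → ℂ) : Prop :=
  ∑ i, Complex.normSq (v i) = 1

/-- The canonical Hermitian operator basis of ℂ^d, indexed by pairs (j,k):
diagonal operators for j = k, real operators for j < k, imaginary operators for j > k. -/
noncomputable def canonG (d : ℕ) : Fin d × Fin d → Matrix (Fin d) (Fin d) ℂ := fun μ =>
  if μ.1 = μ.2 then Matrix.single μ.1 μ.1 1
  else if μ.1 < μ.2 then
    ((Real.sqrt 2 : ℂ))⁻¹ • (Matrix.single μ.1 μ.2 1 + Matrix.single μ.2 μ.1 1)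
  else
    (Complex.I * ((Real.sqrt 2 : ℂ))⁻¹) •
      (Matrix.single μ.2 μ.1 1 - Matrix.single μ.1 μ.2 1)

/-- Covariance matrix of a family of observables w.r.t. a state ρ. -/
noncomputable def covMat {n K : Type*} [Fintype n] (ρ : Matrix n n ℂ)
    (M : K → Matrix n n ℂ) : Matrix K K ℝ :=
  Matrix.of fun j k =>
    (1/2 : ℝ) * expval ρ (M j * M k + M k * M j) - expval ρ (M j) * expval ρ (M k)

/-- The local observables (g_μ ⊗ 1, 1 ⊗ g_ν) on the bipartite space. -/
noncomputable def bipObs (d : ℕ) :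
    (Fin d × Fin d) ⊕ (Fin d × Fin d) → Matrix (Fin d × Fin d) (Fin d × Fin d) ℂ :=
  Sum.elim (fun μ => canonG d μ ⊗ₖ (1 : Matrix (Fin d) (Fin d) ℂ))
           (fun ν => (1 : Matrix (Fin d) (Fin d) ℂ) ⊗ₖ canonG d ν)

/-- The full covariance matrix Γ_ρ of the canonical bipartite observables. -/
noncomputable def GammaCM (d : ℕ) (ρ : Matrix (Fin d × Fin d) (Fin d × Fin d) ℂ) :
    Matrix ((Fin d × Fin d) ⊕ (Fin d × Fin d)) ((Fin d × Fin d) ⊕ (Fin d × Fin d)) ℝ :=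
  covMat ρ (bipObs d)

/-- The cross-covariance block X_ρ. -/
noncomputable def crossCov (d : ℕ) (ρ : Matrix (Fin d × Fin d) (Fin d × Fin d) ℂ) :
    Matrix (Fin d × Fin d) (Fin d × Fin d) ℝ :=
  Matrix.of fun μ ν =>
    expval ρ (canonG d μ ⊗ₖ canonG d ν)
      - expval ρ (canonG d μ ⊗ₖ 1) * expval ρ ((1 : Matrix (Fin d) (Fin d) ℂ) ⊗ₖ canonG d ν)

/-- Reduced state on the first subsystem. -/
noncomputable def redA (d : ℕ) (ρ : Matrix (Fin d × Fin d) (Fin d × Fin d) ℂ) :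
    Matrix (Fin d) (Fin d) ℂ :=
  Matrix.of fun i j => ∑ k, ρ (i, k) (j, k)

/-- Reduced state on the second subsystem. -/
noncomputable def redB (d : ℕ) (ρ : Matrix (Fin d × Fin d) (Fin d × Fin d) ℂ) :
    Matrix (Fin d) (Fin d) ℂ :=
  Matrix.of fun i j => ∑ k, ρ (k, i) (k, j)

/-- Purity tr(σ²) (real part). -/
noncomputable def purity {n : Type*} [Fintype n] (σ : Matrix n n ℂ) : ℝ :=
  ((σ * σ).trace).re

/-- Trace norm of a real matrix: sum of its singular values, i.e. tr √(XᵀX). -/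
noncomputable def traceNorm {n : Type*} [Fintype n] [DecidableEq n] (X : Matrix n n ℝ) : ℝ :=
  ((Matrix.posSemidef_conjTranspose_mul_self X).1.eigenvectorUnitary.1 *
    Matrix.diagonal ((RCLike.ofReal : ℝ → ℝ) ∘ (Real.sqrt ∘ (Matrix.posSemidef_conjTranspose_mul_self X).1.eigenvalues)) *
    (star (Matrix.posSemidef_conjTranspose_mul_self X).1.eigenvectorUnitary : Matrix n n ℝ)).trace

/-- Schmidt rank of a pure state vector is the rank of its coefficient matrix. -/
def SchmidtRankLE (d r : ℕ) (v : Fin d × Fin d → ℂ) : Prop :=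
  (Matrix.of fun j k : Fin d => v (j, k)).rank ≤ r

/-- Schmidt number at most r. -/
def SchmidtNumberLE (d r : ℕ) (ρ : Matrix (Fin d × Fin d) (Fin d × Fin d) ℂ) : Prop :=
  ∃ (n : ℕ) (p : Fin n → ℝ) (ψ : Fin n → (Fin d × Fin d → ℂ)),
    (∀ k, 0 ≤ p k) ∧ (∑ k, p k = 1) ∧ (∀ k, IsUnitVec (ψ k)) ∧
    (∀ k, SchmidtRankLE d r (ψ k)) ∧
    ρ = ∑ k, (p k : ℂ) • pureState (ψ k)

/-- Variance of an observable in a state. -/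
noncomputable def varState {n : Type*} [Fintype n] (σ A : Matrix n n ℂ) : ℝ :=
  expval σ (A * A) - (expval σ A)^2

/-- The magnetic quantum number m_k = k - j - 1 (0-indexed: k - (d-1)/2). -/
noncomputable def spinM (d : ℕ) (k : Fin d) : ℝ := (k : ℝ) - ((d : ℝ) - 1) / 2

/-- The raising operator j₊ for spin j = (d-1)/2. -/
noncomputable def spinPlus (d : ℕ) : Matrix (Fin d) (Fin d) ℂ :=
  Matrix.of fun a b => if (a : ℕ) = (b : ℕ) + 1 then
    (Real.sqrt (((d : ℝ) - 1) / 2 * (((d : ℝ) - 1) / 2 + 1) - spinM d b * (spinM d b + 1)) : ℂ)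
  else 0

/-- The spin operator j_x = (j₊ + j₋)/2. -/
noncomputable def spinX (d : ℕ) : Matrix (Fin d) (Fin d) ℂ :=
  (1 / 2 : ℂ) • (spinPlus d + (spinPlus d)ᴴ)

/-- The spin operator j_y = (j₊ - j₋)/(2i). -/
noncomputable def spinY (d : ℕ) : Matrix (Fin d) (Fin d) ℂ :=
  (-Complex.I / 2) • (spinPlus d - (spinPlus d)ᴴ)

/-- The spin operator j_z. -/
noncomputable def spinZ (d : ℕ) : Matrix (Fin d) (Fin d) ℂ :=
  Matrix.diagonal fun k => (spinM d k : ℂ)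

/-- The quantity Σ_{k=1}^{d-1} k(d-k)(√λ_k - √λ_{k+1})² (0-indexed λ). -/
noncomputable def spinVarSum (d : ℕ) (lam : Fin d → ℝ) : ℝ :=
  ∑ k ∈ Finset.range (d - 1),
    ((k : ℝ) + 1) * ((d : ℝ) - ((k : ℝ) + 1)) *
      (Real.sqrt (if h : k < d then lam ⟨k, h⟩ else 0) -
       Real.sqrt (if h : k + 1 < d then lam ⟨k + 1, h⟩ else 0)) ^ 2

/-- The bound B_{j,r}: infimum of Σ_k k(d-k)(√λ_k - √λ_{k+1})² over probability
vectors λ ∈ ℝ^d with at most r nonzero entries, where d = 2j+1. -/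
noncomputable def Bspin (d r : ℕ) : ℝ :=
  sInf { v : ℝ | ∃ lam : Fin d → ℝ, (∀ k, 0 ≤ lam k) ∧ (∑ k, lam k = 1) ∧
    (Finset.univ.filter fun k => lam k ≠ 0).card ≤ r ∧ v = spinVarSum d lam }

noncomputable def aval (d : ℕ) (k : Fin d) : ℝ :=
  Real.sqrt (((d : ℝ) - 1) / 2 * (((d : ℝ) - 1) / 2 + 1) - spinM d k * (spinM d k + 1))

lemma aval_nonneg (d : ℕ) (k : Fin d) : 0 ≤ aval d k := Real.sqrt_nonneg _

lemma aval_sq (d : ℕ) (k : Fin d) : (aval d k)^2 = ((k:ℝ)+1) * ((d:ℝ) - 1 - (k:ℝ)) := by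
  have h : ((d:ℝ)-1)/2 * (((d:ℝ)-1)/2 + 1) - spinM d k * (spinM d k + 1)
      = ((k:ℝ)+1) * ((d:ℝ) - 1 - (k:ℝ)) := by unfold spinM; ring
  rw [aval, h, Real.sq_sqrt]
  have hk : (k:ℝ) ≤ (d:ℝ) - 1 := by
    have := k.isLt
    have : ((k:ℕ):ℝ) + 1 ≤ (d:ℝ) := by exact_mod_cast this
    linarith
  have : (0:ℝ) ≤ (k:ℝ)+1 := by positivity
  nlinarith

lemma spinX_apply (d : ℕ) (a b : Fin d) :
    spinX d a b = (1/2 : ℂ) * ((if (a:ℕ)=(b:ℕ)+1 then ((aval d b : ℝ) : ℂ) else 0)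
      + (if (b:ℕ)=(a:ℕ)+1 then ((aval d a : ℝ) : ℂ) else 0)) := by
  simp only [spinX, Matrix.smul_apply, Matrix.add_apply, Matrix.conjTranspose_apply,
    spinPlus, Matrix.of_apply, aval, smul_eq_mul]
  rw [apply_ite (star : ℂ → ℂ)]
  simp [Complex.star_def, Complex.conj_ofReal]

lemma spinY_apply (d : ℕ) (a b : Fin d) :
    spinY d a b = (-Complex.I/2) * ((if (a:ℕ)=(b:ℕ)+1 then ((aval d b : ℝ) : ℂ) else 0)
      - (if (b:ℕ)=(a:ℕ)+1 then ((aval d a : ℝ) : ℂ) else 0)) := by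
  simp only [spinY, Matrix.smul_apply, Matrix.sub_apply, Matrix.conjTranspose_apply,
    spinPlus, Matrix.of_apply, aval, smul_eq_mul]
  rw [apply_ite (star : ℂ → ℂ)]
  simp [Complex.star_def, Complex.conj_ofReal]

lemma spinX_diag (d : ℕ) (a : Fin d) : spinX d a a = 0 := by
  rw [spinX_apply]; simp

lemma spinY_diag (d : ℕ) (a : Fin d) : spinY d a a = 0 := by
  rw [spinY_apply]; simp

lemma sum_pair_ite {β : Type*} [AddCommMonoid β] (d : ℕ) (g : Fin d → Fin d → β) :
    (∑ t : Fin d, ∑ i : Fin d, if (i:ℕ) = (t:ℕ)+1 then g t i else 0)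
      = ∑ k ∈ Finset.range (d-1),
          if h : k+1 < d then g ⟨k, Nat.lt_of_succ_lt h⟩ ⟨k+1, h⟩ else 0 := by
  have h1 : ∀ t : Fin d, (∑ i : Fin d, if (i:ℕ) = (t:ℕ)+1 then g t i else 0)
      = if h : (t:ℕ)+1 < d then g t ⟨(t:ℕ)+1, h⟩ else 0 := by
    intro t
    by_cases h : (t:ℕ)+1 < d
    · rw [dif_pos h, Finset.sum_eq_single (⟨(t:ℕ)+1, h⟩ : Fin d)]
      · simp
      · intro b _ hb
        rw [if_neg]
        intro hb'; exact hb (Fin.ext hb')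
      · intro habs; exact absurd (Finset.mem_univ _) habs
    · rw [dif_neg h]
      apply Finset.sum_eq_zero
      intro i _
      rw [if_neg]
      exact fun hi => h (hi ▸ i.isLt)
  simp_rw [h1]
  have h2 : (∑ t : Fin d, if h : (t:ℕ)+1 < d then g t ⟨(t:ℕ)+1, h⟩ else 0)
      = ∑ k ∈ Finset.range d,
          if h : k+1 < d then g ⟨k, Nat.lt_of_succ_lt h⟩ ⟨k+1, h⟩ else 0 := by
    rw [← Fin.sum_univ_eq_sum_range (fun k => if h : k+1 < d
        then g ⟨k, Nat.lt_of_succ_lt h⟩ ⟨k+1, h⟩ else 0) d]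
  rw [h2]
  symm
  apply Finset.sum_subset
  · exact Finset.range_subset_range.mpr (Nat.sub_le d 1)
  · intro k _ hk
    rw [dif_neg]
    simp only [Finset.mem_range] at hk ⊢
    omega

lemma double_ite_sum {β : Type*} [AddCommMonoid β] (d : ℕ) (f g : Fin d → Fin d → β) :
    (∑ i : Fin d, ∑ j : Fin d, ((if (j:ℕ)=(i:ℕ)+1 then f i j else 0)
        + (if (i:ℕ)=(j:ℕ)+1 then g i j else 0)))
    = ∑ k ∈ Finset.range (d-1), if h : k+1 < d then
        (f ⟨k, Nat.lt_of_succ_lt h⟩ ⟨k+1, h⟩ + g ⟨k+1, h⟩ ⟨k, Nat.lt_of_succ_lt h⟩) else 0 := by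
  rw [show (∑ i : Fin d, ∑ j : Fin d, ((if (j:ℕ)=(i:ℕ)+1 then f i j else 0)
        + (if (i:ℕ)=(j:ℕ)+1 then g i j else 0)))
      = (∑ i : Fin d, ∑ j : Fin d, (if (j:ℕ)=(i:ℕ)+1 then f i j else 0))
        + (∑ i : Fin d, ∑ j : Fin d, (if (i:ℕ)=(j:ℕ)+1 then g i j else 0)) by
    rw [← Finset.sum_add_distrib]
    apply Finset.sum_congr rfl
    intro i _
    rw [← Finset.sum_add_distrib]]
  rw [sum_pair_ite d f, Finset.sum_comm, sum_pair_ite d (fun t i => g i t),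
    ← Finset.sum_add_distrib]
  apply Finset.sum_congr rfl
  intro k _
  by_cases h : k+1 < d
  · rw [dif_pos h, dif_pos h, dif_pos h]
  · rw [dif_neg h, dif_neg h, dif_neg h, add_zero]



lemma trace_sc_mul (d : ℕ) (c : Matrix (Fin d) (Fin d) ℂ)
    (M : Matrix (Fin d × Fin d) (Fin d × Fin d) ℂ) :
    ((Matrix.of fun p q : Fin d × Fin d =>
        if p.1 = p.2 ∧ q.1 = q.2 then c p.1 q.1 else 0) * M).trace
      = ∑ i, ∑ j, c i j * M (j, j) (i, i) := by
  simp only [Matrix.trace, Matrix.diag, Matrix.mul_apply, Matrix.of_apply,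
    Fintype.sum_prod_type, ite_and, ite_mul, zero_mul]
  simp [Finset.sum_ite_eq, Finset.sum_ite_eq']

lemma trace_diag_mul (d : ℕ) (v : Fin d → ℂ) (M : Matrix (Fin d) (Fin d) ℂ) :
    (Matrix.diagonal v * M).trace = ∑ i, v i * M i i := by
  simp [Matrix.trace, Matrix.diag, Matrix.diagonal_mul]

lemma redA_sc (d : ℕ) (c : Matrix (Fin d) (Fin d) ℂ) :
    redA d (Matrix.of fun p q : Fin d × Fin d => if p.1 = p.2 ∧ q.1 = q.2 then c p.1 q.1 else 0)
      = Matrix.diagonal (fun i => c i i) := by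
  ext i j
  simp only [redA, Matrix.of_apply, Matrix.diagonal_apply]
  by_cases h : i = j
  · subst h; simp [and_self, Finset.sum_ite_eq]
  · simp only [h, if_false]
    apply Finset.sum_eq_zero
    intro k _
    rw [if_neg]
    rintro ⟨h1, h2⟩
    exact h (h1.trans h2.symm)

lemma redB_sc (d : ℕ) (c : Matrix (Fin d) (Fin d) ℂ) :
    redB d (Matrix.of fun p q : Fin d × Fin d => if p.1 = p.2 ∧ q.1 = q.2 then c p.1 q.1 else 0)
      = Matrix.diagonal (fun i => c i i) := by
  ext i j
  simp only [redB, Matrix.of_apply, Matrix.diagonal_apply]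
  by_cases h : i = j
  · subst h; simp [and_self, Finset.sum_ite_eq']
  · simp only [h, if_false]
    apply Finset.sum_eq_zero
    intro k _
    rw [if_neg]
    rintro ⟨h1, h2⟩
    exact h (h1.symm.trans h2)

lemma expval_sc_kron (d : ℕ) (c : Matrix (Fin d) (Fin d) ℂ)
    (A B : Matrix (Fin d) (Fin d) ℂ) :
    expval (Matrix.of fun p q : Fin d × Fin d =>
        if p.1 = p.2 ∧ q.1 = q.2 then c p.1 q.1 else 0) (A ⊗ₖ B)
      = (∑ i, ∑ j, c i j * (A j i * B j i)).re := by
  rw [expval, trace_sc_mul]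
  simp [Matrix.kroneckerMap_apply]

lemma expval_diag (d : ℕ) (v : Fin d → ℂ) (M : Matrix (Fin d) (Fin d) ℂ) :
    expval (Matrix.diagonal v) M = (∑ i, v i * M i i).re := by
  rw [expval, trace_diag_mul]

lemma prodXX_offd (d : ℕ) (c : Matrix (Fin d) (Fin d) ℂ) (i j : Fin d) :
    c i j * (spinX d j i * spinX d j i)
      = (if (j:ℕ)=(i:ℕ)+1 then (((aval d i)^2/4 : ℝ):ℂ) * c i j else 0)
        + (if (i:ℕ)=(j:ℕ)+1 then (((aval d j)^2/4 : ℝ):ℂ) * c i j else 0) := by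
  rw [spinX_apply d j i]
  by_cases h1 : (j:ℕ)=(i:ℕ)+1 <;> by_cases h2 : (i:ℕ)=(j:ℕ)+1
  · omega
  · simp only [if_pos h1, if_neg h2, add_zero, zero_add]; push_cast; ring
  · simp only [if_pos h2, if_neg h1, add_zero, zero_add]; push_cast; ring
  · simp [if_neg h1, if_neg h2]

lemma expval_sc_XX (d : ℕ) (c : Matrix (Fin d) (Fin d) ℂ) :
    expval (Matrix.of fun p q : Fin d × Fin d =>
        if p.1 = p.2 ∧ q.1 = q.2 then c p.1 q.1 else 0) (spinX d ⊗ₖ spinX d)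
      = ∑ k ∈ Finset.range (d-1), if h : k+1 < d then
          (aval d ⟨k, Nat.lt_of_succ_lt h⟩)^2/4 *
            ((c ⟨k, Nat.lt_of_succ_lt h⟩ ⟨k+1, h⟩).re + (c ⟨k+1, h⟩ ⟨k, Nat.lt_of_succ_lt h⟩).re)
        else 0 := by
  rw [expval_sc_kron]
  simp_rw [prodXX_offd]
  rw [double_ite_sum d (fun i j => (((aval d i)^2/4 : ℝ):ℂ) * c i j)
    (fun i j => (((aval d j)^2/4 : ℝ):ℂ) * c i j), Complex.re_sum]
  apply Finset.sum_congr rfl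
  intro k _
  by_cases h : k+1 < d
  · rw [dif_pos h, dif_pos h]
    simp only [Complex.add_re, Complex.re_ofReal_mul]
    ring
  · rw [dif_neg h, dif_neg h]
    simp



lemma re_mul_ofReal (z : ℂ) (r : ℝ) : (z * (r:ℂ)).re = z.re * r := by
  simp [Complex.mul_re]

lemma prodXX_diag (d : ℕ) (c : Matrix (Fin d) (Fin d) ℂ) (i t : Fin d) :
    c i i * (spinX d i t * spinX d t i)
      = (if (t:ℕ)=(i:ℕ)+1 then (((aval d i)^2/4 : ℝ):ℂ) * c i i else 0)
        + (if (i:ℕ)=(t:ℕ)+1 then (((aval d t)^2/4 : ℝ):ℂ) * c i i else 0) := by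
  rw [spinX_apply d i t, spinX_apply d t i]
  by_cases h1 : (t:ℕ)=(i:ℕ)+1 <;> by_cases h2 : (i:ℕ)=(t:ℕ)+1
  · omega
  · simp only [if_pos h1, if_neg h2, add_zero, zero_add]; push_cast; ring
  · simp only [if_pos h2, if_neg h1, add_zero, zero_add]; push_cast; ring
  · simp [if_neg h1, if_neg h2]

lemma varX_diag (d : ℕ) (c : Matrix (Fin d) (Fin d) ℂ) :
    varState (Matrix.diagonal (fun i => c i i)) (spinX d)
      = ∑ k ∈ Finset.range (d-1), if h : k+1 < d then
          (aval d ⟨k, Nat.lt_of_succ_lt h⟩)^2/4 *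
            ((c ⟨k, Nat.lt_of_succ_lt h⟩ ⟨k, Nat.lt_of_succ_lt h⟩).re + (c ⟨k+1,h⟩ ⟨k+1,h⟩).re)
        else 0 := by
  rw [varState, expval_diag, expval_diag]
  have h0 : (∑ i, c i i * spinX d i i) = 0 := by
    apply Finset.sum_eq_zero; intro i _; rw [spinX_diag]; ring
  have hmul : (∑ i, c i i * (spinX d * spinX d) i i)
      = ∑ i, ∑ t, c i i * (spinX d i t * spinX d t i) := by
    apply Finset.sum_congr rfl; intro i _
    rw [Matrix.mul_apply, Finset.mul_sum]
  rw [h0, hmul]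
  simp_rw [prodXX_diag]
  rw [double_ite_sum d (fun i t => (((aval d i)^2/4 : ℝ):ℂ) * c i i)
    (fun i t => (((aval d t)^2/4 : ℝ):ℂ) * c i i), Complex.re_sum]
  rw [show ((0:ℂ).re)^2 = 0 by norm_num, sub_zero]
  apply Finset.sum_congr rfl
  intro k _
  by_cases h : k+1 < d
  · rw [dif_pos h, dif_pos h]
    simp only [Complex.add_re, Complex.re_ofReal_mul]
    ring
  · rw [dif_neg h, dif_neg h]
    simp

lemma prodYY_eq_XX (d : ℕ) (a b : Fin d) :
    spinY d a b * spinY d b a = spinX d a b * spinX d b a := by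
  rw [spinX_apply d a b, spinX_apply d b a, spinY_apply d a b, spinY_apply d b a]
  by_cases h1 : (a:ℕ)=(b:ℕ)+1 <;> by_cases h2 : (b:ℕ)=(a:ℕ)+1
  · omega
  · simp only [if_pos h1, if_neg h2, add_zero, zero_add, sub_zero, zero_sub]
    ring_nf
    rw [Complex.I_sq]
    ring
  · simp only [if_pos h2, if_neg h1, add_zero, zero_add, sub_zero, zero_sub]
    ring_nf
    rw [Complex.I_sq]
    ring
  · simp [if_neg h1, if_neg h2]

lemma prodYY_neg_XX (d : ℕ) (a b : Fin d) :
    spinY d a b * spinY d a b = -(spinX d a b * spinX d a b) := by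
  rw [spinX_apply d a b, spinY_apply d a b]
  by_cases h1 : (a:ℕ)=(b:ℕ)+1 <;> by_cases h2 : (b:ℕ)=(a:ℕ)+1
  · omega
  · simp only [if_pos h1, if_neg h2, add_zero, zero_add, sub_zero, zero_sub]
    ring_nf
    rw [Complex.I_sq]
    ring
  · simp only [if_pos h2, if_neg h1, add_zero, zero_add, sub_zero, zero_sub]
    ring_nf
    rw [Complex.I_sq]
    ring
  · simp [if_neg h1, if_neg h2]

lemma varY_eq_varX (d : ℕ) (c : Matrix (Fin d) (Fin d) ℂ) :
    varState (Matrix.diagonal (fun i => c i i)) (spinY d)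
      = varState (Matrix.diagonal (fun i => c i i)) (spinX d) := by
  rw [varState, varState, expval_diag, expval_diag, expval_diag, expval_diag]
  have h1 : (∑ i, c i i * (spinY d * spinY d) i i)
      = ∑ i, c i i * (spinX d * spinX d) i i := by
    apply Finset.sum_congr rfl; intro i _
    rw [Matrix.mul_apply, Matrix.mul_apply]
    congr 1
    exact Finset.sum_congr rfl (fun t _ => prodYY_eq_XX d i t)
  have h2 : (∑ i, c i i * spinY d i i) = ∑ i, c i i * spinX d i i := by
    apply Finset.sum_congr rfl; intro i _
    rw [spinX_diag, spinY_diag]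
  rw [h1, h2]

lemma expval_sc_YY_neg (d : ℕ) (c : Matrix (Fin d) (Fin d) ℂ) :
    expval (Matrix.of fun p q : Fin d × Fin d =>
        if p.1 = p.2 ∧ q.1 = q.2 then c p.1 q.1 else 0) (spinY d ⊗ₖ spinY d)
      = - expval (Matrix.of fun p q : Fin d × Fin d =>
          if p.1 = p.2 ∧ q.1 = q.2 then c p.1 q.1 else 0) (spinX d ⊗ₖ spinX d) := by
  rw [expval_sc_kron, expval_sc_kron]
  have : ∀ i j : Fin d, c i j * (spinY d j i * spinY d j i)
      = -(c i j * (spinX d j i * spinX d j i)) := by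
    intro i j; rw [prodYY_neg_XX]; ring
  simp_rw [this, Finset.sum_neg_distrib, Complex.neg_re]

lemma expval_sc_A1_zero (d : ℕ) (c : Matrix (Fin d) (Fin d) ℂ)
    (A : Matrix (Fin d) (Fin d) ℂ) (hA : ∀ i, A i i = 0) :
    expval (Matrix.of fun p q : Fin d × Fin d =>
        if p.1 = p.2 ∧ q.1 = q.2 then c p.1 q.1 else 0)
      (A ⊗ₖ (1 : Matrix (Fin d) (Fin d) ℂ)) = 0 := by
  rw [expval_sc_kron]
  have : ∀ i j : Fin d, c i j * (A j i * (1 : Matrix (Fin d) (Fin d) ℂ) j i) = 0 := by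
    intro i j; by_cases h : j = i
    · subst h; rw [hA]; ring
    · rw [Matrix.one_apply_ne h]; ring
  simp [this]

lemma expval_sc_1A_zero (d : ℕ) (c : Matrix (Fin d) (Fin d) ℂ)
    (A : Matrix (Fin d) (Fin d) ℂ) (hA : ∀ i, A i i = 0) :
    expval (Matrix.of fun p q : Fin d × Fin d =>
        if p.1 = p.2 ∧ q.1 = q.2 then c p.1 q.1 else 0)
      ((1 : Matrix (Fin d) (Fin d) ℂ) ⊗ₖ A) = 0 := by
  rw [expval_sc_kron]
  have : ∀ i j : Fin d, c i j * ((1 : Matrix (Fin d) (Fin d) ℂ) j i * A j i) = 0 := by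
    intro i j; by_cases h : j = i
    · subst h; rw [hA]; ring
    · rw [Matrix.one_apply_ne h]; ring
  simp [this]

lemma expval_sc_ZZ (d : ℕ) (c : Matrix (Fin d) (Fin d) ℂ) :
    expval (Matrix.of fun p q : Fin d × Fin d =>
        if p.1 = p.2 ∧ q.1 = q.2 then c p.1 q.1 else 0) (spinZ d ⊗ₖ spinZ d)
      = ∑ i, (c i i).re * (spinM d i)^2 := by
  rw [expval_sc_kron]
  have h1 : ∀ i : Fin d, (∑ j, c i j * (spinZ d j i * spinZ d j i))
      = c i i * (((spinM d i)^2 : ℝ):ℂ) := by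
    intro i
    rw [Finset.sum_eq_single i]
    · rw [spinZ, Matrix.diagonal_apply_eq]; push_cast; ring
    · intro b _ hb; rw [spinZ, Matrix.diagonal_apply_ne _ hb]; ring
    · intro h; exact absurd (Finset.mem_univ _) h
  simp_rw [h1]
  rw [Complex.re_sum]
  exact Finset.sum_congr rfl (fun i _ => re_mul_ofReal _ _)

lemma expval_sc_Z1 (d : ℕ) (c : Matrix (Fin d) (Fin d) ℂ) :
    expval (Matrix.of fun p q : Fin d × Fin d =>
        if p.1 = p.2 ∧ q.1 = q.2 then c p.1 q.1 else 0)
      (spinZ d ⊗ₖ (1 : Matrix (Fin d) (Fin d) ℂ))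
      = ∑ i, (c i i).re * spinM d i := by
  rw [expval_sc_kron]
  have h1 : ∀ i : Fin d, (∑ j, c i j * (spinZ d j i * (1 : Matrix (Fin d) (Fin d) ℂ) j i))
      = c i i * ((spinM d i : ℝ):ℂ) := by
    intro i
    rw [Finset.sum_eq_single i]
    · rw [spinZ, Matrix.diagonal_apply_eq, Matrix.one_apply_eq]; ring
    · intro b _ hb; rw [spinZ, Matrix.diagonal_apply_ne _ hb]; ring
    · intro h; exact absurd (Finset.mem_univ _) h
  simp_rw [h1]
  rw [Complex.re_sum]
  exact Finset.sum_congr rfl (fun i _ => re_mul_ofReal _ _)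

lemma expval_sc_1Z (d : ℕ) (c : Matrix (Fin d) (Fin d) ℂ) :
    expval (Matrix.of fun p q : Fin d × Fin d =>
        if p.1 = p.2 ∧ q.1 = q.2 then c p.1 q.1 else 0)
      ((1 : Matrix (Fin d) (Fin d) ℂ) ⊗ₖ spinZ d)
      = ∑ i, (c i i).re * spinM d i := by
  rw [expval_sc_kron]
  have h1 : ∀ i : Fin d, (∑ j, c i j * ((1 : Matrix (Fin d) (Fin d) ℂ) j i * spinZ d j i))
      = c i i * ((spinM d i : ℝ):ℂ) := by
    intro i
    rw [Finset.sum_eq_single i]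
    · rw [spinZ, Matrix.diagonal_apply_eq, Matrix.one_apply_eq]; ring
    · intro b _ hb; rw [Matrix.one_apply_ne hb]; ring
    · intro h; exact absurd (Finset.mem_univ _) h
  simp_rw [h1]
  rw [Complex.re_sum]
  exact Finset.sum_congr rfl (fun i _ => re_mul_ofReal _ _)

lemma varZ_diag (d : ℕ) (c : Matrix (Fin d) (Fin d) ℂ) :
    varState (Matrix.diagonal (fun i => c i i)) (spinZ d)
      = (∑ i, (c i i).re * (spinM d i)^2) - (∑ i, (c i i).re * spinM d i)^2 := by
  rw [varState, expval_diag, expval_diag]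
  have h1 : (∑ i, c i i * (spinZ d * spinZ d) i i)
      = ∑ i, c i i * (((spinM d i)^2 : ℝ):ℂ) := by
    apply Finset.sum_congr rfl; intro i _
    rw [spinZ, Matrix.diagonal_mul_diagonal, Matrix.diagonal_apply_eq]
    push_cast; ring
  have h2 : (∑ i, c i i * spinZ d i i) = ∑ i, c i i * ((spinM d i : ℝ):ℂ) := by
    apply Finset.sum_congr rfl; intro i _
    rw [spinZ, Matrix.diagonal_apply_eq]
  rw [h1, h2, Complex.re_sum, Complex.re_sum]
  congr 1
  · exact Finset.sum_congr rfl (fun i _ => re_mul_ofReal _ _)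
  · congr 1
    exact Finset.sum_congr rfl (fun i _ => re_mul_ofReal _ _)



lemma var_nonneg_of_prob {d : ℕ} (lam m : Fin d → ℝ) (h0 : ∀ i, 0 ≤ lam i)
    (h1 : ∑ i, lam i = 1) : (∑ i, lam i * m i)^2 ≤ ∑ i, lam i * (m i)^2 := by
  have hcs := Finset.sum_mul_sq_le_sq_mul_sq Finset.univ
    (fun i => Real.sqrt (lam i)) (fun i => Real.sqrt (lam i) * m i)
  have e1 : (∑ i, Real.sqrt (lam i) * (Real.sqrt (lam i) * m i)) = ∑ i, lam i * m i :=
    Finset.sum_congr rfl fun i _ => by rw [← mul_assoc, Real.mul_self_sqrt (h0 i)]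
  have e2 : (∑ i, Real.sqrt (lam i) ^ 2) = ∑ i, lam i :=
    Finset.sum_congr rfl fun i _ => Real.sq_sqrt (h0 i)
  have e3 : (∑ i, (Real.sqrt (lam i) * m i) ^ 2) = ∑ i, lam i * (m i)^2 :=
    Finset.sum_congr rfl fun i _ => by rw [mul_pow, Real.sq_sqrt (h0 i)]
  rw [e1, e2, e3, h1, one_mul] at hcs
  exact hcs

lemma spinVarSum_nonneg (d : ℕ) (lam : Fin d → ℝ) : 0 ≤ spinVarSum d lam := by
  apply Finset.sum_nonneg
  intro k hk
  rw [Finset.mem_range] at hk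
  have hk1 : (k:ℝ) + 1 ≤ (d:ℝ) := by
    have : k + 1 < d := by omega
    exact_mod_cast Nat.le_of_lt this
  apply mul_nonneg (mul_nonneg (by positivity) (by linarith)) (sq_nonneg _)


/-- For a Schmidt-correlated state ρ with Schmidt number ≤ r (computational
basis = j_z eigenbasis), the spin covariance combination is bounded below by B_{j,r}. -/
theorem schmidt_correlated_spin_covariance_bound
    (d r : ℕ) (hd : 2 ≤ d) (c : Matrix (Fin d) (Fin d) ℂ)
    (ρ : Matrix (Fin d × Fin d) (Fin d × Fin d) ℂ)
    (hform : ρ = Matrix.of fun p q => if p.1 = p.2 ∧ q.1 = q.2 then c p.1 q.1 else 0)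
    (hρ : IsDensityMatrix ρ) (hs : SchmidtNumberLE d r ρ) :
    Bspin d r ≤
      (varState (redA d ρ) (spinX d) + varState (redB d ρ) (spinX d) -
        2 * |expval ρ (spinX d ⊗ₖ spinX d) -
          expval ρ (spinX d ⊗ₖ (1 : Matrix (Fin d) (Fin d) ℂ)) *
          expval ρ ((1 : Matrix (Fin d) (Fin d) ℂ) ⊗ₖ spinX d)|) +
      (varState (redA d ρ) (spinY d) + varState (redB d ρ) (spinY d) -
        2 * |expval ρ (spinY d ⊗ₖ spinY d) -
          expval ρ (spinY d ⊗ₖ (1 : Matrix (Fin d) (Fin d) ℂ)) *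
          expval ρ ((1 : Matrix (Fin d) (Fin d) ℂ) ⊗ₖ spinY d)|) +
      (varState (redA d ρ) (spinZ d) + varState (redB d ρ) (spinZ d) -
        2 * |expval ρ (spinZ d ⊗ₖ spinZ d) -
          expval ρ (spinZ d ⊗ₖ (1 : Matrix (Fin d) (Fin d) ℂ)) *
          expval ρ ((1 : Matrix (Fin d) (Fin d) ℂ) ⊗ₖ spinZ d)|) := by
  classical
  obtain ⟨hpsd, htr⟩ := hρ
  obtain ⟨n, p, ψ, hp0, hp1, hunit, hrank, hdecomp⟩ := hs
  -- entrywise descriptions of ρ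
  have hρ_entry : ∀ P Q : Fin d × Fin d,
      ρ P Q = ∑ m, (p m : ℂ) * (ψ m P * (starRingEnd ℂ) (ψ m Q)) := by
    intro P Q
    rw [hdecomp]
    simp [Matrix.sum_apply, Matrix.smul_apply, pureState, Matrix.vecMulVec_apply,
      Pi.star_apply, Complex.star_def, smul_eq_mul, mul_assoc]
  have hform_entry : ∀ P Q : Fin d × Fin d,
      ρ P Q = if P.1 = P.2 ∧ Q.1 = Q.2 then c P.1 Q.1 else 0 := by
    intro P Q; rw [hform]; rfl
  -- pure components live on the diagonal
  have hoff : ∀ m, p m ≠ 0 → ∀ a b : Fin d, a ≠ b → ψ m (a, b) = 0 := by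
    intro m hm a b hab
    have h0 : (∑ m, (p m : ℂ) * (ψ m (a,b) * (starRingEnd ℂ) (ψ m (a,b)))) = 0 := by
      rw [← hρ_entry (a,b) (a,b), hform_entry]
      simp [hab]
    have h2 : ∀ m : Fin n, ((p m : ℂ) * (ψ m (a,b) * (starRingEnd ℂ) (ψ m (a,b)))).re
        = p m * Complex.normSq (ψ m (a,b)) := by
      intro m; rw [Complex.mul_conj, ← Complex.ofReal_mul, Complex.ofReal_re]
    have h0' : (∑ m, p m * Complex.normSq (ψ m (a,b))) = 0 := by
      have h1 := congrArg Complex.re h0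
      rw [Complex.re_sum] at h1
      simp_rw [h2] at h1
      simpa using h1
    have hz := (Finset.sum_eq_zero_iff_of_nonneg
      (fun i _ => mul_nonneg (hp0 i) (Complex.normSq_nonneg _))).mp h0' m (Finset.mem_univ m)
    rcases mul_eq_zero.mp hz with h | h
    · exact absurd h hm
    · exact Complex.normSq_eq_zero.mp h
  have hc : ∀ i j : Fin d, c i j = ∑ m, (p m : ℂ) * (ψ m (i,i) * (starRingEnd ℂ) (ψ m (j,j))) := by
    intro i j
    have h1 := hform_entry (i,i) (j,j)
    rw [if_pos ⟨rfl, rfl⟩] at h1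
    rw [← h1, hρ_entry]
  have hreal : ∀ i, c i i = ((∑ m, p m * Complex.normSq (ψ m (i,i)) : ℝ) : ℂ) := by
    intro i
    rw [hc i i]
    push_cast
    exact Finset.sum_congr rfl fun m _ => by rw [Complex.mul_conj]
  have hlam_eq : ∀ i, (c i i).re = ∑ m, p m * Complex.normSq (ψ m (i,i)) := by
    intro i; rw [hreal i, Complex.ofReal_re]
  have hlam0 : ∀ i, 0 ≤ (c i i).re := by
    intro i; rw [hlam_eq]
    exact Finset.sum_nonneg fun m _ => mul_nonneg (hp0 m) (Complex.normSq_nonneg _)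
  have hlamsum : (∑ i, (c i i).re) = 1 := by
    have h1 : ρ.trace = ∑ a, c a a := by
      simp only [Matrix.trace, Matrix.diag, Fintype.sum_prod_type]
      apply Finset.sum_congr rfl; intro a _
      rw [Finset.sum_eq_single a]
      · rw [hform_entry]; simp
      · intro b _ hb; rw [hform_entry, if_neg]
        rintro ⟨h,_⟩; exact hb h.symm
      · intro h; exact absurd (Finset.mem_univ _) h
    have h2 : (∑ a, c a a) = 1 := by rw [← h1, htr]
    have := congrArg Complex.re h2
    rw [Complex.re_sum] at this
    simpa using this
  -- per-component facts
  have hsqabs : ∀ (m : Fin n) (i : Fin d),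
      Complex.normSq (ψ m (i,i)) = (‖ψ m (i,i)‖)^2 :=
    fun m i => (Complex.sq_norm _).symm
  have hBddBelow : BddBelow { v : ℝ | ∃ lam : Fin d → ℝ, (∀ k, 0 ≤ lam k) ∧ (∑ k, lam k = 1) ∧
      (Finset.univ.filter fun k => lam k ≠ 0).card ≤ r ∧ v = spinVarSum d lam } := by
    refine ⟨0, fun v hv => ?_⟩
    obtain ⟨lam', _, _, _, rfl⟩ := hv
    exact spinVarSum_nonneg d lam'
  have hBle : ∀ m, p m ≠ 0 →
      Bspin d r ≤ spinVarSum d (fun i => (‖ψ m (i,i)‖)^2) := by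
    intro m hm
    apply csInf_le hBddBelow
    refine ⟨fun i => (‖ψ m (i,i)‖)^2, fun i => sq_nonneg _, ?_, ?_, rfl⟩
    · -- unit sum
      have h1 := hunit m
      rw [IsUnitVec, Fintype.sum_prod_type] at h1
      have h2 : ∀ a : Fin d, (∑ b, Complex.normSq (ψ m (a,b))) = Complex.normSq (ψ m (a,a)) := by
        intro a
        rw [Finset.sum_eq_single a]
        · intro b _ hb; rw [hoff m hm a b (fun h => hb h.symm)]; simp
        · intro h; exact absurd (Finset.mem_univ _) h
      simp_rw [h2] at h1
      rw [← h1]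
      exact Finset.sum_congr rfl fun i _ => (hsqabs m i).symm
    · -- card bound
      have hdiagmat : (Matrix.of fun j k : Fin d => ψ m (j, k))
          = Matrix.diagonal (fun i => ψ m (i,i)) := by
        ext a b
        by_cases h : a = b
        · subst h; rw [Matrix.diagonal_apply_eq]; rfl
        · rw [Matrix.diagonal_apply_ne _ h]
          exact hoff m hm a b h
      have hr := hrank m
      rw [SchmidtRankLE, hdiagmat, Matrix.rank_diagonal] at hr
      rw [Fintype.card_subtype] at hr
      refine le_trans (le_of_eq ?_) hr
      congr 1
      apply Finset.filter_congr
      intro i _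
      constructor
      · intro h h2; exact h (show ‖ψ m (i,i)‖^2 = 0 by rw [h2]; simp)
      · intro h h2
        exact h (by
          have := pow_eq_zero_iff (n := 2) (by norm_num) |>.mp h2
          exact norm_eq_zero.mp this)
  -- rewrite the goal via the computation lemmas
  rw [hform, redA_sc, redB_sc, varY_eq_varX, varX_diag, varZ_diag,
    expval_sc_YY_neg, expval_sc_XX, expval_sc_ZZ, expval_sc_Z1, expval_sc_1Z,
    expval_sc_A1_zero d c (spinX d) (spinX_diag d),
    expval_sc_1A_zero d c (spinX d) (spinX_diag d),
    expval_sc_A1_zero d c (spinY d) (spinY_diag d),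
    expval_sc_1A_zero d c (spinY d) (spinY_diag d)]
  set S : ℝ := ∑ k ∈ Finset.range (d-1), if h : k+1 < d then
      (aval d ⟨k, Nat.lt_of_succ_lt h⟩)^2/4 *
        ((c ⟨k, Nat.lt_of_succ_lt h⟩ ⟨k, Nat.lt_of_succ_lt h⟩).re + (c ⟨k+1,h⟩ ⟨k+1,h⟩).re)
    else 0 with hS
  set E : ℝ := ∑ k ∈ Finset.range (d-1), if h : k+1 < d then
      (aval d ⟨k, Nat.lt_of_succ_lt h⟩)^2/4 *
        ((c ⟨k, Nat.lt_of_succ_lt h⟩ ⟨k+1, h⟩).re + (c ⟨k+1, h⟩ ⟨k, Nat.lt_of_succ_lt h⟩).re)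
    else 0 with hE
  set Z2 : ℝ := ∑ i, (c i i).re * (spinM d i)^2 with hZ2
  set Z1 : ℝ := ∑ i, (c i i).re * spinM d i with hZ1
  have habs1 : |E - 0*0| = |E| := by rw [zero_mul, sub_zero]
  have habs2 : |-E - 0*0| = |E| := by rw [zero_mul, sub_zero, abs_neg]
  rw [habs1, habs2]
  have hV : Z1^2 ≤ Z2 := var_nonneg_of_prob (fun i => (c i i).re) (spinM d) hlam0 hlamsum
  have habs3 : |Z2 - Z1*Z1| = Z2 - Z1*Z1 := by
    apply abs_of_nonneg
    have : Z1 * Z1 = Z1^2 := (sq Z1).symm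
    rw [this]; linarith
  rw [habs3]
  -- bound |E|
  set EB : ℝ := ∑ k ∈ Finset.range (d-1), if h : k+1 < d then
      (aval d ⟨k, Nat.lt_of_succ_lt h⟩)^2/4 *
        (‖c ⟨k, Nat.lt_of_succ_lt h⟩ ⟨k+1, h⟩‖
          + ‖c ⟨k+1, h⟩ ⟨k, Nat.lt_of_succ_lt h⟩‖)
    else 0 with hEB
  have hEbound : |E| ≤ EB := by
    rw [hE, hEB]
    refine le_trans (Finset.abs_sum_le_sum_abs _ _) (Finset.sum_le_sum fun k hk => ?_)
    by_cases h : k+1 < d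
    · rw [dif_pos h, dif_pos h, abs_mul, abs_of_nonneg (by positivity :
        (0:ℝ) ≤ (aval d ⟨k, Nat.lt_of_succ_lt h⟩)^2/4)]
      apply mul_le_mul_of_nonneg_left _ (by positivity)
      refine le_trans (abs_add_le _ _) (add_le_add ?_ ?_) <;>
        exact Complex.abs_re_le_norm _
    · rw [dif_neg h, dif_neg h, abs_zero]
  -- the central inequality
  have hcore : Bspin d r ≤ 4*S - 4*EB := by
    have hGsum : 4*S - 4*EB = ∑ k ∈ Finset.range (d-1), (if h : k+1 < d then
        (aval d ⟨k, Nat.lt_of_succ_lt h⟩)^2 *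
          (((c ⟨k, Nat.lt_of_succ_lt h⟩ ⟨k, Nat.lt_of_succ_lt h⟩).re + (c ⟨k+1,h⟩ ⟨k+1,h⟩).re)
            - (‖c ⟨k, Nat.lt_of_succ_lt h⟩ ⟨k+1, h⟩‖
              + ‖c ⟨k+1, h⟩ ⟨k, Nat.lt_of_succ_lt h⟩‖))
      else 0) := by
      rw [hS, hEB, Finset.mul_sum, Finset.mul_sum, ← Finset.sum_sub_distrib]
      apply Finset.sum_congr rfl
      intro k _
      by_cases h : k+1 < d
      · rw [dif_pos h, dif_pos h, dif_pos h]; ring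
      · rw [dif_neg h, dif_neg h, dif_neg h]; ring
    rw [hGsum]
    -- compare with the decomposition
    have hky : ∀ m : Fin n, p m * spinVarSum d (fun i => (‖ψ m (i,i)‖)^2)
        = ∑ k ∈ Finset.range (d-1), (if h : k+1 < d then
            p m * ((aval d ⟨k, Nat.lt_of_succ_lt h⟩)^2 *
              (‖ψ m (⟨k, Nat.lt_of_succ_lt h⟩, ⟨k, Nat.lt_of_succ_lt h⟩)‖
                - ‖ψ m (⟨k+1, h⟩, ⟨k+1, h⟩)‖)^2)
          else 0) := by
      intro m
      rw [spinVarSum, Finset.mul_sum]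
      apply Finset.sum_congr rfl
      intro k hk
      rw [Finset.mem_range] at hk
      have hk1 : k+1 < d := by omega
      have hk0 : k < d := by omega
      rw [dif_pos hk1, dif_pos hk0, dif_pos hk1]
      rw [Real.sqrt_sq (norm_nonneg _), Real.sqrt_sq (norm_nonneg _)]
      rw [aval_sq]
      have : ((⟨k, Nat.lt_of_succ_lt hk1⟩ : Fin d) : ℝ) = (k:ℝ) := rfl
      rw [this]
      ring
    have hstep : (∑ m, p m * spinVarSum d (fun i => (‖ψ m (i,i)‖)^2))
        ≤ ∑ k ∈ Finset.range (d-1), (if h : k+1 < d then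
        (aval d ⟨k, Nat.lt_of_succ_lt h⟩)^2 *
          (((c ⟨k, Nat.lt_of_succ_lt h⟩ ⟨k, Nat.lt_of_succ_lt h⟩).re + (c ⟨k+1,h⟩ ⟨k+1,h⟩).re)
            - (‖c ⟨k, Nat.lt_of_succ_lt h⟩ ⟨k+1, h⟩‖
              + ‖c ⟨k+1, h⟩ ⟨k, Nat.lt_of_succ_lt h⟩‖))
      else 0) := by
      rw [show (∑ m, p m * spinVarSum d (fun i => (‖ψ m (i,i)‖)^2))
          = ∑ k ∈ Finset.range (d-1), ∑ m, (if h : k+1 < d then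
            p m * ((aval d ⟨k, Nat.lt_of_succ_lt h⟩)^2 *
              (‖ψ m (⟨k, Nat.lt_of_succ_lt h⟩, ⟨k, Nat.lt_of_succ_lt h⟩)‖
                - ‖ψ m (⟨k+1, h⟩, ⟨k+1, h⟩)‖)^2)
          else 0) by
        rw [Finset.sum_comm]
        exact Finset.sum_congr rfl fun m _ => hky m]
      apply Finset.sum_le_sum
      intro k hk
      rw [Finset.mem_range] at hk
      have hk1 : k+1 < d := by omega
      simp only [dif_pos hk1]
      set i0 : Fin d := ⟨k, Nat.lt_of_succ_lt hk1⟩ with hi0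
      set i1 : Fin d := ⟨k+1, hk1⟩ with hi1
      -- key pointwise inequality
      have hlam_pair : (c i0 i0).re + (c i1 i1).re
          = ∑ m, p m * ((‖ψ m (i0,i0)‖)^2 + (‖ψ m (i1,i1)‖)^2) := by
        rw [hlam_eq, hlam_eq, ← Finset.sum_add_distrib]
        apply Finset.sum_congr rfl
        intro m _
        rw [hsqabs, hsqabs]; ring
      have habs01 : ‖c i0 i1‖
          ≤ ∑ m, p m * (‖ψ m (i0,i0)‖ * ‖ψ m (i1,i1)‖) := by
        rw [hc i0 i1]
        refine le_trans (norm_sum_le _ _) (le_of_eq (Finset.sum_congr rfl fun m _ => ?_))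
        rw [norm_mul, norm_mul, Complex.norm_real, Real.norm_eq_abs, Complex.norm_conj,
          abs_of_nonneg (hp0 m)]
      have habs10 : ‖c i1 i0‖
          ≤ ∑ m, p m * (‖ψ m (i1,i1)‖ * ‖ψ m (i0,i0)‖) := by
        rw [hc i1 i0]
        refine le_trans (norm_sum_le _ _) (le_of_eq (Finset.sum_congr rfl fun m _ => ?_))
        rw [norm_mul, norm_mul, Complex.norm_real, Real.norm_eq_abs, Complex.norm_conj,
          abs_of_nonneg (hp0 m)]
      have hinner : (∑ m, p m * ((‖ψ m (i0,i0)‖ - ‖ψ m (i1,i1)‖)^2))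
          ≤ ((c i0 i0).re + (c i1 i1).re)
            - (‖c i0 i1‖ + ‖c i1 i0‖) := by
        have hexp : (∑ m, p m * ((‖ψ m (i0,i0)‖ - ‖ψ m (i1,i1)‖)^2))
            = (∑ m, p m * ((‖ψ m (i0,i0)‖)^2 + (‖ψ m (i1,i1)‖)^2))
              - ((∑ m, p m * (‖ψ m (i0,i0)‖ * ‖ψ m (i1,i1)‖))
                + (∑ m, p m * (‖ψ m (i1,i1)‖ * ‖ψ m (i0,i0)‖))) := by
          rw [← Finset.sum_add_distrib, ← Finset.sum_sub_distrib]
          apply Finset.sum_congr rfl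
          intro m _
          ring
        rw [hexp, hlam_pair]
        linarith
      calc (∑ m, p m * ((aval d i0)^2 *
              (‖ψ m (i0,i0)‖ - ‖ψ m (i1,i1)‖)^2))
          = (aval d i0)^2 * ∑ m, p m *
              ((‖ψ m (i0,i0)‖ - ‖ψ m (i1,i1)‖)^2) := by
            rw [Finset.mul_sum]
            exact Finset.sum_congr rfl fun m _ => by ring
        _ ≤ (aval d i0)^2 * (((c i0 i0).re + (c i1 i1).re)
              - (‖c i0 i1‖ + ‖c i1 i0‖)) :=
            mul_le_mul_of_nonneg_left hinner (sq_nonneg _)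
    -- conclude via Bspin
    have hfinal : Bspin d r ≤ ∑ m, p m * spinVarSum d (fun i => (‖ψ m (i,i)‖)^2) := by
      have h1 : Bspin d r = ∑ m, p m * Bspin d r := by
        rw [← Finset.sum_mul, hp1, one_mul]
      rw [h1]
      apply Finset.sum_le_sum
      intro m _
      rcases eq_or_ne (p m) 0 with h | h
      · rw [h, zero_mul, zero_mul]
      · exact mul_le_mul_of_nonneg_left (hBle m h) (hp0 m)
    exact le_trans hfinal hstep
  have hZzero : Z2 - Z1^2 + (Z2 - Z1^2) - 2*(Z2 - Z1*Z1) = 0 := by ring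
  linarith [hcore, hEbound]
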